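/- Let f̂, ĝ: Ω ⊆ ℝ → I(ℝ) be gH-differentiable at a point x ∈ Ω with f̲, f̅, g̲, g̅ differentiable at x, and suppose both f̂ and ĝ are μ-increasing near x (or both μ-decreasing near x). Then f̂ ⊕ ĝ is gH-differentiable at x and (f̂ ⊕ ĝ)'(x) = f̂'(x) ⊕ ĝ'(x), where ⊕ is Minkowski addition of intervals. -/

import Mathlib

open Filter

/-- If `f̂ = [f̲,f̅]` and `ĝ = [g̲,g̅]` are gH-differentiable at `x` (with gH-derivatives
`[Flo, Fhi]` and `[Glo, Ghi]` respectively), their endpoint functions are differentiable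
at `x`, and both are μ-increasing (or both μ-decreasing) on a neighborhood `U` of `x`,
then `f̂ ⊕ ĝ` is gH-differentiable at `x` and `(f̂ ⊕ ĝ)'(x) = f̂'(x) ⊕ ĝ'(x)`. -/

private lemma min_max_add_of_ord {a b c d : ℝ}
    (h : (a ≤ b ∧ c ≤ d) ∨ (b ≤ a ∧ d ≤ c)) :
    min (a + c) (b + d) = min a b + min c d ∧
    max (a + c) (b + d) = max a b + max c d := by
  rcases h with ⟨h1, h2⟩ | ⟨h1, h2⟩
  · rw [min_eq_left h1, min_eq_left h2, min_eq_left (by linarith),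
      max_eq_right h1, max_eq_right h2, max_eq_right (by linarith)]
    exact ⟨rfl, rfl⟩
  · rw [min_eq_right h1, min_eq_right h2, min_eq_right (by linarith),
      max_eq_left h1, max_eq_left h2, max_eq_left (by linarith)]
    exact ⟨rfl, rfl⟩

private lemma quot_le_of_sign {A B h : ℝ} (hs : 0 ≤ (B - A) / h) : A / h ≤ B / h := by
  have : B / h - A / h = (B - A) / h := by ring
  linarith [this ▸ hs]

theorem gH_deriv_add_equally_monotonic
    (flo fhi glo ghi : ℝ → ℝ) (hfle : ∀ t, flo t ≤ fhi t) (hgle : ∀ t, glo t ≤ ghi t)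
    (x : ℝ) (U : Set ℝ) (hU : U ∈ nhds x)
    (hmono : (MonotoneOn (fun t => fhi t - flo t) U ∧ MonotoneOn (fun t => ghi t - glo t) U)
      ∨ (AntitoneOn (fun t => fhi t - flo t) U ∧ AntitoneOn (fun t => ghi t - glo t) U))
    (dflo dfhi dglo dghi Flo Fhi Glo Ghi : ℝ)
    (hdflo : HasDerivAt flo dflo x) (hdfhi : HasDerivAt fhi dfhi x)
    (hdglo : HasDerivAt glo dglo x) (hdghi : HasDerivAt ghi dghi x)
    (hF : Tendsto (fun h : ℝ =>
          min ((flo (x + h) - flo x) / h) ((fhi (x + h) - fhi x) / h))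
        (nhdsWithin 0 {(0:ℝ)}ᶜ) (nhds Flo) ∧
      Tendsto (fun h : ℝ =>
          max ((flo (x + h) - flo x) / h) ((fhi (x + h) - fhi x) / h))
        (nhdsWithin 0 {(0:ℝ)}ᶜ) (nhds Fhi))
    (hG : Tendsto (fun h : ℝ =>
          min ((glo (x + h) - glo x) / h) ((ghi (x + h) - ghi x) / h))
        (nhdsWithin 0 {(0:ℝ)}ᶜ) (nhds Glo) ∧
      Tendsto (fun h : ℝ =>
          max ((glo (x + h) - glo x) / h) ((ghi (x + h) - ghi x) / h))
        (nhdsWithin 0 {(0:ℝ)}ᶜ) (nhds Ghi)) :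
    Tendsto (fun h : ℝ =>
        min (((flo (x + h) + glo (x + h)) - (flo x + glo x)) / h)
            (((fhi (x + h) + ghi (x + h)) - (fhi x + ghi x)) / h))
      (nhdsWithin 0 {(0:ℝ)}ᶜ) (nhds (Flo + Glo)) ∧
    Tendsto (fun h : ℝ =>
        max (((flo (x + h) + glo (x + h)) - (flo x + glo x)) / h)
            (((fhi (x + h) + ghi (x + h)) - (fhi x + ghi x)) / h))
      (nhdsWithin 0 {(0:ℝ)}ᶜ) (nhds (Fhi + Ghi)) := by
  have hxU : x ∈ U := mem_of_mem_nhds hU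
  have hxh : ∀ᶠ h : ℝ in nhdsWithin 0 {(0:ℝ)}ᶜ, x + h ∈ U := by
    have ht : Tendsto (fun h : ℝ => x + h) (nhds 0) (nhds x) := by
      simpa using (continuous_add_left x).tendsto (0 : ℝ)
    exact (ht.eventually_mem hU).filter_mono nhdsWithin_le_nhds
  have hne : ∀ᶠ h : ℝ in nhdsWithin 0 {(0:ℝ)}ᶜ, h ≠ 0 := by
    filter_upwards [self_mem_nhdsWithin] with h hh
    exact hh
  -- sign facts: quotient of spread differences
  have key : ∀ᶠ h : ℝ in nhdsWithin 0 {(0:ℝ)}ᶜ,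
      ((flo (x + h) - flo x) / h ≤ (fhi (x + h) - fhi x) / h ∧
       (glo (x + h) - glo x) / h ≤ (ghi (x + h) - ghi x) / h) ∨
      ((fhi (x + h) - fhi x) / h ≤ (flo (x + h) - flo x) / h ∧
       (ghi (x + h) - ghi x) / h ≤ (glo (x + h) - glo x) / h) := by
    filter_upwards [hxh, hne] with h hhU hh0
    have sign : ∀ p q : ℝ → ℝ, MonotoneOn (fun t => q t - p t) U →
        (p (x + h) - p x) / h ≤ (q (x + h) - q x) / h := by
      intro p q hm
      apply quot_le_of_sign
      have key2 : (q (x + h) - q x) - (p (x + h) - p x)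
          = (q (x + h) - p (x + h)) - (q x - p x) := by ring
      rcases hh0.lt_or_gt with hlt | hgt
      · have hle : q (x + h) - p (x + h) ≤ q x - p x :=
          hm hhU hxU (by linarith)
        have : (q (x + h) - q x) - (p (x + h) - p x) ≤ 0 := by
          rw [key2]; linarith
        rw [← neg_div_neg_eq]
        exact div_nonneg (by linarith) (by linarith)
      · have hle : q x - p x ≤ q (x + h) - p (x + h) :=
          hm hxU hhU (by linarith)
        exact div_nonneg (by rw [key2]; linarith) hgt.le
    rcases hmono with ⟨hmf, hmg⟩ | ⟨haf, hag⟩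
    · exact Or.inl ⟨sign flo fhi hmf, sign glo ghi hmg⟩
    · have hswap : ∀ p q : ℝ → ℝ, AntitoneOn (fun t => q t - p t) U →
          MonotoneOn (fun t => p t - q t) U := by
        intro p q ha s hs t ht hst
        have := ha hs ht hst
        simp only at this ⊢
        linarith
      exact Or.inr ⟨sign fhi flo (hswap flo fhi haf), sign ghi glo (hswap glo ghi hag)⟩
  have heqmin : (fun h : ℝ =>
      min ((flo (x + h) - flo x) / h) ((fhi (x + h) - fhi x) / h) +
      min ((glo (x + h) - glo x) / h) ((ghi (x + h) - ghi x) / h)) =ᶠ[nhdsWithin 0 {(0:ℝ)}ᶜ]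
      (fun h : ℝ =>
      min (((flo (x + h) + glo (x + h)) - (flo x + glo x)) / h)
          (((fhi (x + h) + ghi (x + h)) - (fhi x + ghi x)) / h)) := by
    filter_upwards [key] with h hk
    have h1 : ((flo (x + h) + glo (x + h)) - (flo x + glo x)) / h
        = (flo (x + h) - flo x) / h + (glo (x + h) - glo x) / h := by ring
    have h2 : ((fhi (x + h) + ghi (x + h)) - (fhi x + ghi x)) / h
        = (fhi (x + h) - fhi x) / h + (ghi (x + h) - ghi x) / h := by ring
    rw [h1, h2, (min_max_add_of_ord hk).1]
  have heqmax : (fun h : ℝ =>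
      max ((flo (x + h) - flo x) / h) ((fhi (x + h) - fhi x) / h) +
      max ((glo (x + h) - glo x) / h) ((ghi (x + h) - ghi x) / h)) =ᶠ[nhdsWithin 0 {(0:ℝ)}ᶜ]
      (fun h : ℝ =>
      max (((flo (x + h) + glo (x + h)) - (flo x + glo x)) / h)
          (((fhi (x + h) + ghi (x + h)) - (fhi x + ghi x)) / h)) := by
    filter_upwards [key] with h hk
    have h1 : ((flo (x + h) + glo (x + h)) - (flo x + glo x)) / h
        = (flo (x + h) - flo x) / h + (glo (x + h) - glo x) / h := by ring
    have h2 : ((fhi (x + h) + ghi (x + h)) - (fhi x + ghi x)) / h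
        = (fhi (x + h) - fhi x) / h + (ghi (x + h) - ghi x) / h := by ring
    rw [h1, h2, (min_max_add_of_ord hk).2]
  exact ⟨(hF.1.add hG.1).congr' heqmin, (hF.2.add hG.2).congr' heqmax⟩
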